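/- If X is positive semidefinite and A is symmetric with A • X = 0 where the staircase matrix A has identity r×r upper-left block and zero lower-right (n−r)×(n−r) block, then for any symmetric B the value B • X depends only on the lower-right (n−r)×(n−r) block of B; in particular if B has identity block I_{r'} starting at row r and zeros in its lower-right block, B • X = 0 forces rows/columns r through r+r'−1 of X to also vanish. -/

import Mathlib

open Matrix

lemma psd_diag_nonneg {n : ℕ} {X : Matrix (Fin n) (Fin n) ℝ} (hX : X.PosSemidef)
    (i : Fin n) : 0 ≤ X i i := by
  have := hX.dotProduct_mulVec_nonneg (Pi.single i 1)
  simpa [dotProduct, mulVec, Pi.single_apply, Finset.sum_ite_eq', Finset.sum_ite_eq] using this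

lemma psd_col_zero {n : ℕ} {X : Matrix (Fin n) (Fin n) ℝ} (hX : X.PosSemidef)
    {i : Fin n} (h : X i i = 0) (j : Fin n) : X j i = 0 ∧ X i j = 0 := by
  have hd : star (Pi.single i 1 : Fin n → ℝ) ⬝ᵥ X *ᵥ (Pi.single i 1) = 0 := by
    simpa [dotProduct, mulVec, Pi.single_apply, Finset.sum_ite_eq', Finset.sum_ite_eq] using h
  have hc := (hX.dotProduct_mulVec_zero_iff _).mp hd
  have h1 : X j i = 0 := by
    have := congrFun hc j
    simpa [mulVec, dotProduct, Pi.single_apply, Finset.sum_ite_eq', Finset.sum_ite_eq] using this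
  refine ⟨h1, ?_⟩
  have := congrFun (congrFun hX.1 j) i
  simp [Matrix.conjTranspose_apply] at this
  rw [this, h1]

theorem staircase_induction_step (n r r' : ℕ)
    (A B X : Matrix (Fin n) (Fin n) ℝ)
    (hAdiag : ∀ i : Fin n, (i : ℕ) < r → A i i = 1)
    (hAoff : ∀ i j : Fin n, i ≠ j → A i j = 0)
    (hAlow : ∀ i j : Fin n, r ≤ (i : ℕ) → r ≤ (j : ℕ) → A i j = 0)
    (hX : X.PosSemidef) (htrA : Matrix.trace (A * X) = 0)
    (hB : B.IsSymm)
    (hBdiag : ∀ i : Fin n, r ≤ (i : ℕ) → (i : ℕ) < r + r' → B i i = 1)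
    (hBoff : ∀ i j : Fin n, i ≠ j → r ≤ (i : ℕ) → r ≤ (j : ℕ) → B i j = 0)
    (hBlow : ∀ i j : Fin n, r + r' ≤ (i : ℕ) → r + r' ≤ (j : ℕ) → B i j = 0)
    (htrB : Matrix.trace (B * X) = 0) :
    (∀ B₁ B₂ : Matrix (Fin n) (Fin n) ℝ, B₁.IsSymm → B₂.IsSymm →
      (∀ i j : Fin n, r ≤ (i : ℕ) → r ≤ (j : ℕ) → B₁ i j = B₂ i j) →
      Matrix.trace (B₁ * X) = Matrix.trace (B₂ * X)) ∧
    (∀ i j : Fin n,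
      ((r ≤ (i : ℕ) ∧ (i : ℕ) < r + r') ∨ (r ≤ (j : ℕ) ∧ (j : ℕ) < r + r')) →
      X i j = 0) := by
  -- Step 1: diagonal entries of X with index < r vanish
  have htrA' : ∑ i : Fin n, ∑ j : Fin n, A i j * X j i = 0 := by
    simpa [Matrix.trace, Matrix.mul_apply, Matrix.diag] using htrA
  have hsum1 : ∑ i : Fin n, (if (i : ℕ) < r then X i i else 0) = 0 := by
    rw [show (∑ i : Fin n, (if (i : ℕ) < r then X i i else 0))
        = ∑ i : Fin n, ∑ j : Fin n, A i j * X j i from ?_, htrA']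
    refine Finset.sum_congr rfl fun i _ => ?_
    have hinner : ∑ j : Fin n, A i j * X j i = A i i * X i i :=
      Finset.sum_eq_single_of_mem i (Finset.mem_univ i)
        (fun b _ hb => by rw [hAoff i b (Ne.symm hb)]; ring)
    rw [hinner]
    by_cases hi : (i : ℕ) < r
    · simp [hAdiag i hi, hi]
    · simp [hAlow i i (le_of_not_gt hi) (le_of_not_gt hi), hi]
  have hXdiag1 : ∀ i : Fin n, (i : ℕ) < r → X i i = 0 := by
    intro i hi
    have := (Finset.sum_eq_zero_iff_of_nonneg (fun j _ => by
      by_cases hj : (j : ℕ) < r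
      · simpa [hj] using psd_diag_nonneg hX j
      · simp [hj])).mp hsum1 i (Finset.mem_univ i)
    simpa [hi] using this
  -- Step 2: all entries with a coordinate < r vanish
  have hXr : ∀ i j : Fin n, (i : ℕ) < r ∨ (j : ℕ) < r → X i j = 0 := by
    intro i j hij
    rcases hij with h | h
    · exact (psd_col_zero hX (hXdiag1 i h) j).2
    · exact (psd_col_zero hX (hXdiag1 j h) i).1
  -- Part 1
  have part1 : ∀ B₁ B₂ : Matrix (Fin n) (Fin n) ℝ, B₁.IsSymm → B₂.IsSymm →
      (∀ i j : Fin n, r ≤ (i : ℕ) → r ≤ (j : ℕ) → B₁ i j = B₂ i j) →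
      Matrix.trace (B₁ * X) = Matrix.trace (B₂ * X) := by
    intro B₁ B₂ _ _ hEq
    simp only [Matrix.trace, Matrix.mul_apply, Matrix.diag]
    refine Finset.sum_congr rfl fun i _ => Finset.sum_congr rfl fun j _ => ?_
    by_cases hi : r ≤ (i : ℕ)
    · by_cases hj : r ≤ (j : ℕ)
      · rw [hEq i j hi hj]
      · rw [hXr j i (Or.inl (not_le.mp hj))]; ring
    · rw [hXr j i (Or.inr (not_le.mp hi))]; ring
  refine ⟨part1, ?_⟩
  -- Part 2
  have htrB' : ∑ i : Fin n, ∑ j : Fin n, B i j * X j i = 0 := by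
    simpa [Matrix.trace, Matrix.mul_apply, Matrix.diag] using htrB
  have hsum2 : ∑ i : Fin n, (if r ≤ (i : ℕ) ∧ (i : ℕ) < r + r' then X i i else 0) = 0 := by
    rw [show (∑ i : Fin n, (if r ≤ (i : ℕ) ∧ (i : ℕ) < r + r' then X i i else 0))
        = ∑ i : Fin n, ∑ j : Fin n, B i j * X j i from ?_, htrB']
    refine Finset.sum_congr rfl fun i _ => ?_
    have hinner : ∑ j : Fin n, B i j * X j i = B i i * X i i :=
      Finset.sum_eq_single_of_mem i (Finset.mem_univ i) (fun b _ hb => by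
        by_cases hi : r ≤ (i : ℕ)
        · by_cases hbr : r ≤ (b : ℕ)
          · rw [hBoff i b (Ne.symm hb) hi hbr]; ring
          · rw [hXr b i (Or.inl (not_le.mp hbr))]; ring
        · rw [hXr b i (Or.inr (not_le.mp hi))]; ring)
    rw [hinner]
    by_cases hi : r ≤ (i : ℕ)
    · by_cases hi' : (i : ℕ) < r + r'
      · simp [hBdiag i hi hi', hi, hi']
      · simp [hBlow i i (le_of_not_gt hi') (le_of_not_gt hi'), hi, hi']
    · rw [hXr i i (Or.inl (not_le.mp hi))]
      simp [hi]
  have hXdiag2 : ∀ i : Fin n, r ≤ (i : ℕ) → (i : ℕ) < r + r' → X i i = 0 := by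
    intro i hi hi'
    have := (Finset.sum_eq_zero_iff_of_nonneg (fun j _ => by
      by_cases hj : r ≤ (j : ℕ) ∧ (j : ℕ) < r + r'
      · simpa [hj] using psd_diag_nonneg hX j
      · simp [hj])).mp hsum2 i (Finset.mem_univ i)
    simpa [hi, hi'] using this
  intro i j hij
  rcases hij with ⟨h1, h2⟩ | ⟨h1, h2⟩
  · exact (psd_col_zero hX (hXdiag2 i h1 h2) j).2
  · exact (psd_col_zero hX (hXdiag2 j h1 h2) i).1
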